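/- arXiv:2006.01231 — 2 statements merged into one kernel-verified Lean document; each statement's English description precedes it below -/
import Mathlib

section
/- If descent occurs at the coarse MG/OPT level, the prolongated correction is a descent direction at the fine level: suppose $\mathcal{J}_{k-1}(v'_{k-1}) < \mathcal{J}_{k-1}(v_{k-1})$ and the Hessian of $\mathcal{J}_{k-1}$ is positive semidefinite at every point on the segment connecting $v_{k-1}$ and $v'_{k-1}$. Then $d_k = I_{k-1}^k(v'_{k-1} - v_{k-1})$ satisfies $\langle\nabla\mathcal{J}_k(v_{k,1}), d_k\rangle_k < 0$. -/
open Set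
open InnerProductSpace

/-- If descent occurs at the coarse MG/OPT level and the coarse
Hessian is positive semidefinite along the segment connecting the coarse
iterates, then the prolongated coarse correction is a descent direction at the
fine level. -/
theorem mgopt_coarse_descent
    {Uk Ukm : Type*}
    [NormedAddCommGroup Uk] [InnerProductSpace ℝ Uk] [FiniteDimensional ℝ Uk]
    [NormedAddCommGroup Ukm] [InnerProductSpace ℝ Ukm] [FiniteDimensional ℝ Ukm]
    (P : Ukm →L[ℝ] Uk)  -- prolongation `I_{k-1}^k`
    (R : Uk →L[ℝ] Ukm)  -- restriction `I_k^{k-1}`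
    (hadj : ∀ (z : Ukm) (u : Uk), (inner ℝ (P z) u : ℝ) = inner ℝ z (R u))
    (Jk : Uk → ℝ) (Jkm : Ukm → ℝ)
    (hJk : Differentiable ℝ Jk) (hJkm : ContDiff ℝ 2 Jkm)
    (vk1 : Uk) (vkm vkm' : Ukm)
    -- coarse-gradient matching from the MG/OPT construction of `τ_{k-1}`
    (hmatch : R (gradient Jk vk1) = gradient Jkm vkm)
    -- descent at the coarse level
    (hdesc : Jkm vkm' < Jkm vkm)
    -- positive semidefinite Hessian on the segment connecting `vkm` and `vkm'`
    (hHess : ∀ t ∈ Icc (0 : ℝ) 1, ∀ w : Ukm,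
      0 ≤ (inner ℝ (fderiv ℝ (fun x => gradient Jkm x) (vkm + t • (vkm' - vkm)) w) w : ℝ))
    (dk : Uk) (hdk : dk = P (vkm' - vkm)) :
    (inner ℝ (gradient Jk vk1) dk : ℝ) < 0 := by
  set z := vkm' - vkm with hz
  set c : ℝ → Ukm := fun t => vkm + t • z with hcdef
  have hJkm1 : Differentiable ℝ Jkm := hJkm.differentiable (by norm_num)
  have hc : ∀ t : ℝ, HasDerivAt c z t := by
    intro t
    have := ((hasDerivAt_id t).smul_const z).const_add vkm
    rw [one_smul] at this
    exact this
  -- gradient is differentiable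
  have hfd : Differentiable ℝ (fderiv ℝ Jkm) :=
    (hJkm.fderiv_right (m := 1) (by norm_num)).differentiable one_ne_zero
  have hgrad : Differentiable ℝ (gradient Jkm) := by
    have : gradient Jkm = fun x => (toDual ℝ Ukm).symm (fderiv ℝ Jkm x) := rfl
    rw [this]
    exact (toDual ℝ Ukm).symm.toContinuousLinearEquiv.differentiable.comp hfd
  -- φ and its derivative
  set φ : ℝ → ℝ := fun t => Jkm (c t) with hφdef
  set φ' : ℝ → ℝ := fun t => inner ℝ z (gradient Jkm (c t)) with hφ'def
  have hφd : ∀ t : ℝ, HasDerivAt φ (φ' t) t := by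
    intro t
    have h1 : HasDerivAt φ (fderiv ℝ Jkm (c t) z) t :=
      (hJkm1 (c t)).hasFDerivAt.comp_hasDerivAt t (hc t)
    have h2 : fderiv ℝ Jkm (c t) z = φ' t := by
      simp only [hφ'def]
      rw [real_inner_comm, gradient, toDual_symm_apply]
    rwa [h2] at h1
  -- second derivative of φ
  set ψ : ℝ → ℝ := fun t => inner ℝ z (fderiv ℝ (gradient Jkm) (c t) z) with hψdef
  have hφ'd : ∀ t : ℝ, HasDerivAt φ' (ψ t) t := by
    intro t
    have hG : HasDerivAt (fun s => gradient Jkm (c s)) (fderiv ℝ (gradient Jkm) (c t) z) t :=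
      (hgrad (c t)).hasFDerivAt.comp_hasDerivAt t (hc t)
    exact (innerSL ℝ z).hasFDerivAt.comp_hasDerivAt t hG
  -- ψ is nonneg on [0,1]
  have hψ0 : ∀ t ∈ Icc (0 : ℝ) 1, 0 ≤ ψ t := by
    intro t ht
    have := hHess t ht z
    rw [real_inner_comm] at this
    exact this
  -- φ' is monotone on [0,1]
  have hφ'mono : MonotoneOn φ' (Icc (0 : ℝ) 1) := by
    apply monotoneOn_of_deriv_nonneg (convex_Icc 0 1)
      (fun t _ => (hφ'd t).continuousAt.continuousWithinAt)
      (fun t _ => ((hφ'd t).differentiableAt).differentiableWithinAt)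
    intro t ht
    rw [interior_Icc] at ht
    rw [(hφ'd t).deriv]
    exact hψ0 t (Ioo_subset_Icc_self ht)
  -- h t = φ t - t * φ' 0 is monotone on [0,1]
  set h : ℝ → ℝ := fun t => φ t - t * φ' 0 with hhdef
  have hhd : ∀ t : ℝ, HasDerivAt h (φ' t - φ' 0) t := by
    intro t
    have := (hφd t).sub ((hasDerivAt_id t).mul_const (φ' 0))
    rw [one_mul] at this
    exact this
  have hhmono : MonotoneOn h (Icc (0 : ℝ) 1) := by
    apply monotoneOn_of_deriv_nonneg (convex_Icc 0 1)
      (fun t _ => (hhd t).continuousAt.continuousWithinAt)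
      (fun t _ => ((hhd t).differentiableAt).differentiableWithinAt)
    intro t ht
    rw [interior_Icc] at ht
    rw [(hhd t).deriv]
    have := hφ'mono (left_mem_Icc.mpr zero_le_one) (Ioo_subset_Icc_self ht) (le_of_lt ht.1)
    linarith
  have hkey : φ' 0 ≤ Jkm vkm' - Jkm vkm := by
    have h01 := hhmono (left_mem_Icc.mpr zero_le_one) (right_mem_Icc.mpr zero_le_one) zero_le_one
    have hφ0 : φ 0 = Jkm vkm := by simp [hφdef, hcdef]
    have hφ1 : φ 1 = Jkm vkm' := by simp [hφdef, hcdef, hz]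
    simp only [hhdef, hφ0, hφ1, zero_mul, one_mul, sub_zero] at h01
    linarith
  have hφ'0 : φ' 0 = inner ℝ z (gradient Jkm vkm) := by
    simp [hφ'def, hcdef]
  rw [hdk, real_inner_comm, hadj, hmatch]
  rw [hφ'0] at hkey
  linarith
end

section
/- If the smoother fixes the optimum and the coarse-gradient matching holds, the MG/OPT V-cycle fixes the optimum: if $v_K = u_K$ is a point where $\nabla\mathcal{J}_K(u_K) = 0$ and each smoother $S_k$ maps any point with vanishing gradient of $\mathcal{J}_k$ to itself, then at every level $k$ reached by the recursion the gradient $\nabla\mathcal{J}_k(v_k)$ vanishes and all coarse corrections $d_k$ are zero, so the V-cycle returns $u_K$ unchanged. -/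
lemma grad_shift {E : Type*} [NormedAddCommGroup E] [InnerProductSpace ℝ E] [CompleteSpace E]
    (J : E → ℝ) (hJ : Differentiable ℝ J) (τ v : E) :
    gradient (fun u => J u - (inner ℝ τ u : ℝ)) v = gradient J v - τ := by
  have h1 : HasGradientAt J (gradient J v) v := (hJ v).hasFDerivAt.hasGradientAt
  have h2 : HasGradientAt (fun u : E => (inner ℝ τ u : ℝ)) τ v := by
    rw [hasGradientAt_iff_hasFDerivAt]
    exact (innerSL ℝ τ).hasFDerivAt
  have h3 : HasGradientAt (fun u => J u - (inner ℝ τ u : ℝ)) (gradient J v - τ) v := by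
    rw [hasGradientAt_iff_hasFDerivAt, map_sub]
    exact h1.hasFDerivAt.sub h2.hasFDerivAt
  exact h3.gradient

/-- The MG/OPT V-cycle recursion (Algorithm 1): presmoothing, restriction,
correction term, recursive coarse solve, prolongated correction with step
size, postsmoothing.  `S k τ` is one step of the smoother for the corrected
problem `𝒥_k(u) = Ĵ_k(u) - ⟪τ, u⟫_k`. -/
noncomputable def mgoptVcycle
    (U : ℕ → Type) [∀ k, NormedAddCommGroup (U k)]
    [∀ k, InnerProductSpace ℝ (U k)] [∀ k, CompleteSpace (U k)]
    (S : ∀ k, U k → U k → U k)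
    (R : ∀ k : ℕ, U (k + 1) →L[ℝ] U k)
    (P : ∀ k : ℕ, U k →L[ℝ] U (k + 1))
    (Jhat : ∀ k, U k → ℝ)
    (ν μ : ℕ → ℕ) (s : ℕ → ℝ) :
    ∀ k, U k → U k → U k
  | 0, τ, v => (S 0 τ)^[ν 0 + μ 0] v
  | (k + 1), τ, v =>
    let v1 := (S (k + 1) τ)^[ν (k + 1)] v
    let vm := R k v1
    let τ' := R k τ + gradient (Jhat k) vm - R k (gradient (Jhat (k + 1)) v1)
    let v' := mgoptVcycle U S R P Jhat ν μ s k τ' vm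
    let d := P k (v' - vm)
    (S (k + 1) τ)^[μ (k + 1)] (v1 + s (k + 1) • d)

/-- If every smoother fixes points with vanishing corrected
gradient, then the MG/OPT V-cycle fixes the optimum: at every level reached by
the recursion the corrected gradient vanishes, all coarse corrections are
zero, and the V-cycle returns its input unchanged. -/
theorem mgopt_vcycle_fixes_optimum
    (U : ℕ → Type) [∀ k, NormedAddCommGroup (U k)]
    [∀ k, InnerProductSpace ℝ (U k)] [∀ k, CompleteSpace (U k)]
    (S : ∀ k, U k → U k → U k)
    (R : ∀ k : ℕ, U (k + 1) →L[ℝ] U k)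
    (P : ∀ k : ℕ, U k →L[ℝ] U (k + 1))
    (Jhat : ∀ k, U k → ℝ)
    (hdiff : ∀ k, Differentiable ℝ (Jhat k))
    (ν μ : ℕ → ℕ) (s : ℕ → ℝ)
    -- each smoother maps any point with vanishing corrected gradient to itself
    (hfix : ∀ k (τ : U k) (v : U k),
      gradient (fun u => Jhat k u - (inner ℝ τ u : ℝ)) v = 0 → S k τ v = v)
    (K : ℕ) (τK : U K) (uK : U K)
    (hopt : gradient (fun u => Jhat K u - (inner ℝ τK u : ℝ)) uK = 0) :
    mgoptVcycle U S R P Jhat ν μ s K τK uK = uK := by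
  induction K with
  | zero =>
    rw [mgoptVcycle]
    exact Function.iterate_fixed (hfix 0 τK uK hopt) _
  | succ k ih =>
    have hfixS : S (k + 1) τK uK = uK := hfix (k + 1) τK uK hopt
    have hv1 : (S (k + 1) τK)^[ν (k + 1)] uK = uK := Function.iterate_fixed hfixS _
    have hgrad : gradient (Jhat (k + 1)) uK = τK := by
      have := grad_shift (Jhat (k + 1)) (hdiff (k + 1)) τK uK
      rw [hopt] at this
      linear_combination (norm := abel) -this
    rw [mgoptVcycle]
    simp only [hv1, hgrad]
    set τ' := R k τK + gradient (Jhat k) (R k uK) - R k τK with hτ'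
    have hτ'' : τ' = gradient (Jhat k) (R k uK) := by rw [hτ']; abel
    have hcoarse : mgoptVcycle U S R P Jhat ν μ s k τ' (R k uK) = R k uK := by
      apply ih
      rw [grad_shift (Jhat k) (hdiff k) τ' (R k uK), hτ'', sub_self]
    rw [hcoarse]
    simp only [sub_self, map_zero, smul_zero, add_zero]
    exact Function.iterate_fixed hfixS _
end
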